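/- Let R be a subdirect product of finite algebras A₁,…,Aₙ, with prime intervals α_i ≺ β_i in Con(A_i) and α_j ≺ β_j in Con(A_j), and suppose some unary polynomial of R separates (α_i,β_i) from (α_j,β_j). Then there is an idempotent unary polynomial f of R separating (α_i,β_i) from (α_j,β_j) such that the image f(A_i) is an (α_i,β_i)-minimal set. -/

import Mathlib

namespace UAlg

structure Sig where
  ι : Type
  arity : ι → ℕ

inductive Term (σ : Sig) (n : ℕ) : Type where
  | var : Fin n → Term σ n
  | app : (i : σ.ι) → (Fin (σ.arity i) → Term σ n) → Term σ n

def Str (σ : Sig) (A : Type) : Type := ∀ i : σ.ι, (Fin (σ.arity i) → A) → A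

variable {σ : Sig} {A B : Type}

def Term.eval {n : ℕ} (S : Str σ A) : Term σ n → (Fin n → A) → A
  | .var j, x => x j
  | .app i ts, x => S i fun k => Term.eval S (ts k) x

/-- A subuniverse: a subset closed under all basic operations. -/
def Subuniv (S : Str σ A) (X : Set A) : Prop :=
  ∀ (i : σ.ι) (x : Fin (σ.arity i) → A), (∀ k, x k ∈ X) → S i x ∈ X

/-- Subalgebra generated by a set. -/
def Sg (S : Str σ A) (X : Set A) : Set A :=
  {a | ∀ Y : Set A, Subuniv S Y → X ⊆ Y → a ∈ Y}

def prodStr (S : Str σ A) (T : Str σ B) : Str σ (A × B) :=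
  fun i x => (S i (fun k => (x k).1), T i (fun k => (x k).2))

structure IsCongruence (S : Str σ A) (r : A → A → Prop) : Prop where
  refl : ∀ a, r a a
  symm : ∀ a b, r a b → r b a
  trans : ∀ a b c, r a b → r b c → r a c
  compat : ∀ (i : σ.ι) (x y : Fin (σ.arity i) → A),
    (∀ k, r (x k) (y k)) → r (S i x) (S i y)

/-- A tolerance: reflexive, symmetric, compatible binary relation. -/
def IsTolerance (S : Str σ A) (r : A → A → Prop) : Prop :=
  (∀ a, r a a) ∧ (∀ a b, r a b → r b a) ∧
    ∀ (i : σ.ι) (x y : Fin (σ.arity i) → A),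
      (∀ k, r (x k) (y k)) → r (S i x) (S i y)

/-- Unary polynomial: a term operation with parameters. -/
def IsUnaryPoly (S : Str σ A) (f : A → A) : Prop :=
  ∃ (n : ℕ) (t : Term σ (n + 1)) (c : Fin n → A),
    f = fun x => t.eval S (Fin.cons x c)

def IsBinPoly (S : Str σ A) (f : A → A → A) : Prop :=
  ∃ (n : ℕ) (t : Term σ (n + 2)) (c : Fin n → A),
    f = fun x y => t.eval S (Fin.cons x (Fin.cons y c))

def IsPolyOp (S : Str σ A) (n : ℕ) (f : (Fin n → A) → A) : Prop :=
  ∃ (m : ℕ) (t : Term σ (n + m)) (c : Fin m → A),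
    f = fun x => t.eval S (Fin.append x c)

def IsTermOp2 (S : Str σ A) (f : A → A → A) : Prop :=
  ∃ t : Term σ 2, f = fun x y => t.eval S (Fin.cons x (Fin.cons y (fun i => i.elim0)))

def IsTermOp3 (S : Str σ A) (f : A → A → A → A) : Prop :=
  ∃ t : Term σ 3,
    f = fun x y z => t.eval S (Fin.cons x (Fin.cons y (Fin.cons z (fun i => i.elim0))))

/-- `f` collapses `β` into `α`. -/
def Collapses (f : A → A) (β α : A → A → Prop) : Prop :=
  ∀ x y, β x y → α (f x) (f y)

def CongLE (r s : A → A → Prop) : Prop := ∀ x y, r x y → s x y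

/-- `β` covers `α` in the congruence lattice. -/
def Prec (S : Str σ A) (α β : A → A → Prop) : Prop :=
  CongLE α β ∧ α ≠ β ∧
    ∀ γ, IsCongruence S γ → CongLE α γ → CongLE γ β → γ = α ∨ γ = β

def MinSetWitness (S : Str σ A) (α β : A → A → Prop) (U : Set A) : Prop :=
  ∃ f, IsUnaryPoly S f ∧ ¬ Collapses f β α ∧ Set.range f = U

/-- An (α,β)-minimal set. -/
def MinSet (S : Str σ A) (α β : A → A → Prop) (U : Set A) : Prop :=
  MinSetWitness S α β U ∧ ∀ V, MinSetWitness S α β V → V ⊆ U → V = U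

/-- Term condition C(θ,β;α) (with polynomials). -/
def TC (S : Str σ A) (θ β α : A → A → Prop) : Prop :=
  ∀ (n : ℕ) (f : (Fin (n + 1) → A) → A), IsPolyOp S (n + 1) f →
    ∀ a b (u v : Fin n → A), θ a b → (∀ i, β (u i) (v i)) →
      (α (f (Fin.cons a u)) (f (Fin.cons a v)) ↔ α (f (Fin.cons b u)) (f (Fin.cons b v)))

/-- Strong term condition. -/
def STC (S : Str σ A) (θ β α : A → A → Prop) : Prop :=
  ∀ (n : ℕ) (f : (Fin (n + 1) → A) → A), IsPolyOp S (n + 1) f →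
    ∀ a b c (u v : Fin n → A), θ a b → θ a c → (∀ i, β (u i) (v i)) →
      α (f (Fin.cons a u)) (f (Fin.cons b v)) → α (f (Fin.cons c u)) (f (Fin.cons c v))

/-- An (α,β)-trace: intersection of a minimal set with a β-block on which β ≠ α. -/
def IsTrace (S : Str σ A) (α β : A → A → Prop) (N : Set A) : Prop :=
  ∃ U, MinSet S α β U ∧ ∃ a ∈ U, N = {x | x ∈ U ∧ β x a} ∧
    ∃ x ∈ N, ∃ y ∈ N, ¬ α x y

def TwoClasses (α : A → A → Prop) (N : Set A) (o e : A) : Prop :=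
  o ∈ N ∧ e ∈ N ∧ ¬ α o e ∧ ∀ x ∈ N, α x o ∨ α x e

def MeetOn (S : Str σ A) (α : A → A → Prop) (N : Set A) (o e : A) : Prop :=
  ∃ p, IsBinPoly S p ∧ (∀ x ∈ N, ∀ y ∈ N, p x y ∈ N) ∧
    ∀ x ∈ N, ∀ y ∈ N,
      (α x e → α y e → α (p x y) e) ∧ ((α x o ∨ α y o) → α (p x y) o)

def JoinOn (S : Str σ A) (α : A → A → Prop) (N : Set A) (o e : A) : Prop :=
  ∃ p, IsBinPoly S p ∧ (∀ x ∈ N, ∀ y ∈ N, p x y ∈ N) ∧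
    ∀ x ∈ N, ∀ y ∈ N,
      ((α x e ∨ α y e) → α (p x y) e) ∧ (α x o → α y o → α (p x y) o)

def NegOn (S : Str σ A) (α : A → A → Prop) (N : Set A) (o e : A) : Prop :=
  ∃ f, IsUnaryPoly S f ∧ (∀ x ∈ N, f x ∈ N) ∧
    ∀ x ∈ N, (α x e → α (f x) o) ∧ (α x o → α (f x) e)

def Typ3 (S : Str σ A) (α β : A → A → Prop) : Prop :=
  ¬ TC S β β α ∧ ∀ N, IsTrace S α β N →
    ∃ o e, TwoClasses α N o e ∧ MeetOn S α N o e ∧ JoinOn S α N o e ∧ NegOn S α N o e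

def Typ4 (S : Str σ A) (α β : A → A → Prop) : Prop :=
  ¬ TC S β β α ∧ (∀ N, IsTrace S α β N →
    ∃ o e, TwoClasses α N o e ∧ MeetOn S α N o e ∧ JoinOn S α N o e) ∧ ¬ Typ3 S α β

def Typ5 (S : Str σ A) (α β : A → A → Prop) : Prop :=
  ¬ TC S β β α ∧ (∀ N, IsTrace S α β N →
    ∃ o e, TwoClasses α N o e ∧ MeetOn S α N o e) ∧ ¬ Typ3 S α β ∧ ¬ Typ4 S α β

/-- Tame-congruence-theoretic type of the prime interval (α,β). -/
def TypIs (S : Str σ A) (α β : A → A → Prop) (k : ℕ) : Prop :=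
  match k with
  | 1 => STC S β β α
  | 2 => TC S β β α ∧ ¬ STC S β β α
  | 3 => Typ3 S α β
  | 4 => Typ4 S α β
  | 5 => Typ5 S α β
  | _ => False

/-- θ centralizes β modulo α (via binary polynomials). -/
def Centralizes (S : Str σ A) (θ β α : A → A → Prop) : Prop :=
  ∀ f, IsBinPoly S f → ∀ a b c d, θ a b → β c d →
    (α (f a c) (f a d) ↔ α (f b c) (f b d))

/-- ζ is the centralizer (α:β): the largest congruence centralizing β modulo α. -/
def IsCentralizer (S : Str σ A) (α β ζ : A → A → Prop) : Prop :=
  IsCongruence S ζ ∧ Centralizes S ζ β α ∧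
    ∀ θ, IsCongruence S θ → Centralizes S θ β α → CongLE θ ζ

/-- The quasi-centralizer relation ζ(α,β). -/
def QuasiCent (S : Str σ A) (α β : A → A → Prop) (a b : A) : Prop :=
  ∀ g, IsBinPoly S g →
    (Collapses (fun y => g a y) β α ↔ Collapses (fun y => g b y) β α)

def SubdirectProd (S : Str σ A) (T : Str σ B) (R : Set (A × B)) : Prop :=
  Subuniv (prodStr S T) R ∧ (∀ a, ∃ b, (a, b) ∈ R) ∧ (∀ b, ∃ a, (a, b) ∈ R)

/-- (f,g) are the coordinate actions of a single unary polynomial of R. -/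
def IsPolyPair (S : Str σ A) (T : Str σ B) (R : Set (A × B)) (f : A → A) (g : B → B) : Prop :=
  ∃ (n : ℕ) (t : Term σ (n + 1)) (c : Fin n → A × B), (∀ k, c k ∈ R) ∧
    (f = fun x => t.eval S (Fin.cons x (fun k => (c k).1))) ∧
    (g = fun y => t.eval T (Fin.cons y (fun k => (c k).2)))

def SeparatesPair (S : Str σ A) (T : Str σ B) (R : Set (A × B))
    (α β : A → A → Prop) (γ δ : B → B → Prop) : Prop :=
  ∃ f g, IsPolyPair S T R f g ∧ ¬ Collapses f β α ∧ Collapses g δ γ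

def SeparatesPairRev (S : Str σ A) (T : Str σ B) (R : Set (A × B))
    (γ δ : B → B → Prop) (α β : A → A → Prop) : Prop :=
  ∃ f g, IsPolyPair S T R f g ∧ ¬ Collapses g δ γ ∧ Collapses f β α

/-- Separation of prime intervals within a single algebra. -/
def SeparatesIn (S : Str σ A) (α β γ δ : A → A → Prop) : Prop :=
  ∃ f, IsUnaryPoly S f ∧ ¬ Collapses f β α ∧ Collapses f δ γ

def tolFst (R : Set (A × B)) : A → A → Prop := fun a b => ∃ c, (a, c) ∈ R ∧ (b, c) ∈ R
def tolSnd (R : Set (A × B)) : B → B → Prop := fun a b => ∃ c, (c, a) ∈ R ∧ (c, b) ∈ R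

/-- Q_ab: the subalgebra of A² generated by the diagonal together with (a,b). -/
def Qab (S : Str σ A) (a b : A) : Set (A × A) :=
  Sg (prodStr S S) ({p : A × A | p.1 = p.2} ∪ {(a, b)})

/-- Principal congruence generated by (a,b). -/
def CgPair (S : Str σ A) (a b : A) : A → A → Prop :=
  fun x y => ∀ r, IsCongruence S r → r a b → r x y

def CongSup (S : Str σ A) (r s : A → A → Prop) : A → A → Prop :=
  fun x y => ∀ t, IsCongruence S t → CongLE r t → CongLE s t → t x y

def RelInf (r s : A → A → Prop) : A → A → Prop := fun x y => r x y ∧ s x y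

def Perspective (S : Str σ A) (α β γ δ : A → A → Prop) : Prop :=
  (β = CongSup S α δ ∧ γ = RelInf α δ) ∨ (δ = CongSup S β γ ∧ α = RelInf β γ)

/-- Thin semilattice edge modulo θ. -/
def ThinSL (S : Str σ A) (θ : A → A → Prop) (a b : A) : Prop :=
  ∃ f, IsTermOp2 S f ∧ θ (f a b) b ∧ θ (f b a) b

/-- Thin majority edge modulo θ. -/
def ThinMajE (S : Str σ A) (θ : A → A → Prop) (a b : A) : Prop :=
  ∃ g, IsTermOp3 S g ∧ θ (g a a b) a ∧ θ (g a b a) a ∧ θ (g b a a) a ∧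
    θ (g a b b) b ∧ θ (g b a b) b ∧ θ (g b b a) b

/-- Thin affine edge modulo θ. -/
def ThinAff (S : Str σ A) (θ : A → A → Prop) (a b : A) : Prop :=
  ∃ h, IsTermOp3 S h ∧ θ (h b a a) b ∧ θ (h a a b) b

def ThinEdge (S : Str σ A) (θ : A → A → Prop) (a b : A) : Prop :=
  ThinSL S θ a b ∨ ThinMajE S θ a b ∨ ThinAff S θ a b

def ThinAS (S : Str σ A) (θ : A → A → Prop) (a b : A) : Prop :=
  ThinSL S θ a b ∨ ThinAff S θ a b

def classOf (r : A → A → Prop) (a : A) : Set A := {x | r x a}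

def IdemStr (S : Str σ A) : Prop := ∀ (i : σ.ι) (a : A), S i (fun _ => a) = a

def OmitsType1 (S : Str σ A) : Prop :=
  ∀ α β : A → A → Prop, IsCongruence S α → IsCongruence S β → Prec S α β →
    ¬ TypIs S α β 1

def ReachASIn (S : Str σ A) (B : Set A) : A → A → Prop :=
  Relation.ReflTransGen (fun x y => x ∈ B ∧ y ∈ B ∧ ThinAS S (· = ·) x y)

/-- D is a maximal strongly connected component of the semilattice+affine digraph on B. -/
def IsASComponent (S : Str σ A) (B D : Set A) : Prop :=
  D.Nonempty ∧ D ⊆ B ∧ (∀ x ∈ D, ∀ y ∈ D, ReachASIn S B x y) ∧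
    ∀ x ∈ D, ∀ y ∈ B, ReachASIn S B x y → y ∈ D

def Reach (S : Str σ A) : A → A → Prop :=
  Relation.ReflTransGen (ThinEdge S (· = ·))

/-- u-maximal element of A. -/
def UMax (S : Str σ A) (a : A) : Prop := ∀ b, Reach S a b → Reach S b a

def ReachIn (S : Str σ A) (B : Set A) : A → A → Prop :=
  Relation.ReflTransGen (fun x y => x ∈ B ∧ y ∈ B ∧ ThinEdge S (· = ·) x y)

/-- u-maximal element of the subalgebra B. -/
def UMaxIn (S : Str σ A) (B : Set A) (b : A) : Prop :=
  b ∈ B ∧ ∀ c ∈ B, ReachIn S B b c → ReachIn S B c b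

def ReachMod (S : Str σ A) (θ : A → A → Prop) : A → A → Prop :=
  Relation.ReflTransGen (fun x y => θ x y ∨ ThinEdge S θ x y)

/-- The θ-block of a is u-maximal in A/θ. -/
def UMaxMod (S : Str σ A) (θ : A → A → Prop) (a : A) : Prop :=
  ∀ b, ReachMod S θ a b → ReachMod S θ b a

def CongOn (S : Str σ A) (B : Set A) (r : A → A → Prop) : Prop :=
  (∀ a ∈ B, r a a) ∧ (∀ a b, r a b → r b a) ∧ (∀ a b c, r a b → r b c → r a c) ∧
    ∀ (i : σ.ι) (x y : Fin (σ.arity i) → A), (∀ k, x k ∈ B) → (∀ k, y k ∈ B) →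
      (∀ k, r (x k) (y k)) → r (S i x) (S i y)

def MaximalCongOn (S : Str σ A) (B : Set A) (r : A → A → Prop) : Prop :=
  CongOn S B r ∧ (∃ a ∈ B, ∃ b ∈ B, ¬ r a b) ∧
    ∀ r', CongOn S B r' → (∀ x y, x ∈ B → y ∈ B → r x y → r' x y) →
      ((∀ x y, x ∈ B → y ∈ B → (r' x y ↔ r x y)) ∨ ∀ x ∈ B, ∀ y ∈ B, r' x y)

/-- Semilattice edge (thick). -/
def SLEdge (S : Str σ A) (a b : A) : Prop :=
  ∃ θ, MaximalCongOn S (Sg S {a, b}) θ ∧ ¬ θ a b ∧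
    ∃ f, IsTermOp2 S f ∧ θ (f a b) b ∧ θ (f b a) b ∧ θ (f a a) a ∧ θ (f b b) b

/-- Majority edge (thick). -/
def MajEdge (S : Str σ A) (a b : A) : Prop :=
  ∃ θ, MaximalCongOn S (Sg S {a, b}) θ ∧ ¬ θ a b ∧
    ∃ g, IsTermOp3 S g ∧ θ (g a a b) a ∧ θ (g a b a) a ∧ θ (g b a a) a ∧
      θ (g a b b) b ∧ θ (g b a b) b ∧ θ (g b b a) b

def famStr {n : ℕ} {𝔸 : Fin n → Type} (S : ∀ i, Str σ (𝔸 i)) : Str σ (∀ i, 𝔸 i) :=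
  fun op x i => S i op (fun k => x k i)

def SubdirectFam {n : ℕ} {𝔸 : Fin n → Type} (S : ∀ i, Str σ (𝔸 i))
    (R : Set (∀ i, 𝔸 i)) : Prop :=
  Subuniv (famStr S) R ∧ ∀ (i : Fin n) (a : 𝔸 i), ∃ r ∈ R, r i = a

/-- f is the family of coordinate actions of a single unary polynomial of R. -/
def IsPolyFam {n : ℕ} {𝔸 : Fin n → Type} (S : ∀ i, Str σ (𝔸 i)) (R : Set (∀ i, 𝔸 i))
    (f : ∀ i, 𝔸 i → 𝔸 i) : Prop :=
  ∃ (m : ℕ) (t : Term σ (m + 1)) (c : Fin m → ∀ i, 𝔸 i), (∀ k, c k ∈ R) ∧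
    ∀ i, f i = fun x => t.eval (S i) (Fin.cons x (fun k => c k i))

/-- (α_i,β_i) can be separated from (α_j,β_j) by a unary polynomial of R. -/
def SeparatesFam {n : ℕ} {𝔸 : Fin n → Type} (S : ∀ i, Str σ (𝔸 i)) (R : Set (∀ i, 𝔸 i))
    (i j : Fin n) (αi βi : 𝔸 i → 𝔸 i → Prop) (αj βj : 𝔸 j → 𝔸 j → Prop) : Prop :=
  ∃ f, IsPolyFam S R f ∧ ¬ Collapses (f i) βi αi ∧ Collapses (f j) βj αj

end UAlg

namespace UAlg

variable {σ : Sig} {A : Type}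

-- substitution
def Term.subst {n m : ℕ} : Term σ n → (Fin n → Term σ m) → Term σ m
  | .var j, θ => θ j
  | .app i ts, θ => .app i (fun k => (ts k).subst θ)

lemma Term.eval_subst {n m : ℕ} (S : Str σ A) (t : Term σ n) (θ : Fin n → Term σ m)
    (x : Fin m → A) : (t.subst θ).eval S x = t.eval S (fun j => (θ j).eval S x) := by
  induction t with
  | var j => rfl
  | app op ts ih => simp only [Term.subst, Term.eval, ih]

/-- the term composing t₁ (outer) with t₂ (inner), constants appended. -/
def compTerm {n₁ n₂ : ℕ} (t₁ : Term σ (n₁ + 1)) (t₂ : Term σ (n₂ + 1)) :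
    Term σ (n₁ + n₂ + 1) :=
  t₁.subst (Fin.cons
    (t₂.subst (Fin.cons (.var 0) (fun k => .var (Fin.natAdd n₁ k).succ)))
    (fun k => .var (Fin.castAdd n₂ k).succ))

lemma compTerm_eval {n₁ n₂ : ℕ} (S : Str σ A) (t₁ : Term σ (n₁ + 1)) (t₂ : Term σ (n₂ + 1))
    (c₁ : Fin n₁ → A) (c₂ : Fin n₂ → A) (x : A) :
    (compTerm t₁ t₂).eval S (Fin.cons x (Fin.append c₁ c₂)) =
      t₁.eval S (Fin.cons (t₂.eval S (Fin.cons x c₂)) c₁) := by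
  rw [compTerm, Term.eval_subst]
  congr 1
  funext jj
  refine Fin.cases ?_ (fun k => ?_) jj
  · simp only [Fin.cons_zero]
    rw [Term.eval_subst]
    congr 1
    funext j'
    refine Fin.cases ?_ (fun k => ?_) j'
    · simp [Term.eval]
    · simp [Term.eval, Fin.cons_succ, Fin.append_right]
  · simp [Term.eval, Fin.cons_succ, Fin.append_left]

lemma IsUnaryPoly.id (S : Str σ A) : IsUnaryPoly S (fun x => x) :=
  ⟨0, .var 0, Fin.elim0, rfl⟩

lemma IsUnaryPoly.comp {S : Str σ A} {p q : A → A} (hp : IsUnaryPoly S p)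
    (hq : IsUnaryPoly S q) : IsUnaryPoly S (fun x => p (q x)) := by
  obtain ⟨n₁, t₁, c₁, rfl⟩ := hp
  obtain ⟨n₂, t₂, c₂, rfl⟩ := hq
  exact ⟨n₁ + n₂, compTerm t₁ t₂, Fin.append c₁ c₂,
    funext fun x => (compTerm_eval S t₁ t₂ c₁ c₂ x).symm⟩

lemma eval_congr {S : Str σ A} {θ : A → A → Prop} (hθ : IsCongruence S θ)
    {m : ℕ} (t : Term σ m) {x y : Fin m → A} (h : ∀ j, θ (x j) (y j)) :
    θ (t.eval S x) (t.eval S y) := by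
  induction t with
  | var j => exact h j
  | app op ts ih => exact hθ.compat op _ _ fun k => ih k

lemma IsUnaryPoly.pres {S : Str σ A} {θ : A → A → Prop} (hθ : IsCongruence S θ)
    {p : A → A} (hp : IsUnaryPoly S p) {a b : A} (hab : θ a b) : θ (p a) (p b) := by
  obtain ⟨m, t, c, rfl⟩ := hp
  refine eval_congr hθ t fun j => ?_
  refine Fin.cases ?_ (fun k => ?_) j <;> simp [Fin.cons_zero, Fin.cons_succ, hab, hθ.refl]

lemma update_op_poly (S : Str σ A) (op : σ.ι) (w : Fin (σ.arity op) → A)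
    (k : Fin (σ.arity op)) :
    IsUnaryPoly S (fun a => S op (Function.update w k a)) := by
  refine ⟨σ.arity op, .app op (fun l => if l = k then .var 0 else .var l.succ), w, ?_⟩
  funext a
  show S op _ = S op _
  congr 1
  funext l
  by_cases h : l = k <;>
    simp [Term.eval, h, Function.update_apply, apply_ite (Term.eval S ·)]


section Chain
variable {S : Str σ A} {α β : A → A → Prop}

/-- links of the Mal'cev chain generating Cg(α ∪ {(u,v)}) -/
def Link (S : Str σ A) (α : A → A → Prop) (u v : A) (x y : A) : Prop :=
  α x y ∨ ∃ q, IsUnaryPoly S q ∧ ((x = q u ∧ y = q v) ∨ (x = q v ∧ y = q u))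

variable {u v : A}

lemma link_symm (hα : IsCongruence S α) : ∀ x y, Link S α u v x y → Link S α u v y x := by
  rintro x y (h | ⟨q, hq, h | h⟩)
  · exact Or.inl (hα.symm _ _ h)
  · exact Or.inr ⟨q, hq, Or.inr ⟨h.2, h.1⟩⟩
  · exact Or.inr ⟨q, hq, Or.inl ⟨h.2, h.1⟩⟩

abbrev Chain (S : Str σ A) (α : A → A → Prop) (u v : A) : A → A → Prop :=
  Relation.ReflTransGen (Link S α u v)

lemma chain_poly (hα : IsCongruence S α) {p : A → A} (hp : IsUnaryPoly S p) {x y : A}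
    (h : Chain S α u v x y) : Chain S α u v (p x) (p y) := by
  refine Relation.ReflTransGen.lift p (fun a b hab => ?_) _ _ h
  rcases hab with h | ⟨q, hq, h | h⟩
  · exact Or.inl (hp.pres hα h)
  · exact Or.inr ⟨fun z => p (q z), hp.comp hq, Or.inl ⟨by rw [h.1], by rw [h.2]⟩⟩
  · exact Or.inr ⟨fun z => p (q z), hp.comp hq, Or.inr ⟨by rw [h.1], by rw [h.2]⟩⟩

lemma chain_cong (hα : IsCongruence S α) : IsCongruence S (Chain S α u v) := by
  refine ⟨fun a => .refl, fun a b h => ?_, fun a b c h1 h2 => h1.trans h2, ?_⟩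
  · exact (haveI : Std.Symm (Link S α u v) := ⟨fun a b => link_symm hα a b⟩; Std.Symm.symm _ _ h)
  · intro op x y hxy
    classical
    have key : ∀ T : Finset (Fin (σ.arity op)),
        Chain S α u v (S op x) (S op (fun l => if l ∈ T then y l else x l)) := by
      intro T
      induction T using Finset.induction with
      | empty => simpa using Relation.ReflTransGen.refl
      | @insert k T hk ih =>
        refine ih.trans ?_
        have hz : (fun l => if l ∈ insert k T then y l else x l) =
            Function.update (fun l => if l ∈ T then y l else x l) k (y k) := by
          funext l
          by_cases hl : l = k
          · subst hl; simp [hk]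
          · simp [Function.update_apply, hl]
        have hz' : (fun l => if l ∈ T then y l else x l) =
            Function.update (fun l => if l ∈ T then y l else x l) k (x k) := by
          funext l
          by_cases hl : l = k
          · subst hl; simp [hk]
          · simp [Function.update_apply, hl]
        rw [hz]
        conv_lhs => rw [hz']
        exact chain_poly hα (update_op_poly S op _ k) (hxy k)
    have := key Finset.univ
    simpa using this

/-- The chain congruence equals β when α ≺ β and (u,v) ∈ β \ α. -/
lemma chain_eq_beta (hα : IsCongruence S α) (hβ : IsCongruence S β) (hpr : Prec S α β) (huv : β u v) (hnuv : ¬ α u v) :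
    Chain S α u v = β := by
  have hle : CongLE (Chain S α u v) β := by
    intro x y h
    induction h with
    | refl => exact hβ.refl _
    | tail _ hl ih =>
      refine hβ.trans _ _ _ ih ?_
      rcases hl with h | ⟨q, hq, h | h⟩
      · exact hpr.1 _ _ h
      · rw [h.1, h.2]; exact hq.pres hβ huv
      · rw [h.1, h.2]; exact hq.pres hβ (hβ.symm _ _ huv)
  have hge : CongLE α (Chain S α u v) := fun x y h =>
    Relation.ReflTransGen.single (Or.inl h)
  rcases hpr.2.2 _ (chain_cong hα) hge hle with h | h
  · exfalso
    apply hnuv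
    rw [← h]
    exact Relation.ReflTransGen.single
      (Or.inr ⟨fun z => z, IsUnaryPoly.id S, Or.inl ⟨rfl, rfl⟩⟩)
  · exact h

/-- L1: the key step lemma. -/
lemma key_step (hα : IsCongruence S α) (hβ : IsCongruence S β) (hpr : Prec S α β) (huv : β u v) (hnuv : ¬ α u v)
    {p : A → A} (hp : IsUnaryPoly S p) (hnc : ¬ Collapses p β α) :
    ∃ q, IsUnaryPoly S q ∧ ¬ α (p (q u)) (p (q v)) := by
  classical
  have hex : ∃ x y, β x y ∧ ¬ α (p x) (p y) := by
    by_contra h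
    push_neg at h
    exact hnc h
  obtain ⟨x, y, hxy, hnxy⟩ := hex
  have hch : Chain S α u v x y := by
    rw [chain_eq_beta hα hβ hpr huv hnuv]; exact hxy
  clear hxy
  induction hch using Relation.ReflTransGen.head_induction_on with
  | refl => exact absurd (hα.refl (p y)) hnxy
  | @head a c hl hch ih =>
    by_cases hac : α (p a) (p c)
    · exact ih (fun h => hnxy (hα.trans _ _ _ hac h))
    · rcases hl with h | ⟨q, hq, h | h⟩
      · exact absurd (hp.pres hα h) hac
      · exact ⟨q, hq, by rw [← h.1, ← h.2]; exact hac⟩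
      · exact ⟨q, hq, fun hc => hac (by rw [h.1, h.2]; exact hα.symm _ _ hc)⟩

end Chain

section Fam
variable {n : ℕ} {𝔸 : Fin n → Type} {S : ∀ i, Str σ (𝔸 i)} {R : Set (∀ i, 𝔸 i)}

lemma IsPolyFam.coord {f : ∀ i, 𝔸 i → 𝔸 i} (hf : IsPolyFam S R f) (i : Fin n) :
    IsUnaryPoly (S i) (f i) := by
  obtain ⟨m, t, c, hc, he⟩ := hf
  exact ⟨m, t, fun k => c k i, he i⟩

lemma IsPolyFam.comp {f g : ∀ i, 𝔸 i → 𝔸 i} (hf : IsPolyFam S R f)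
    (hg : IsPolyFam S R g) : IsPolyFam S R (fun i x => f i (g i x)) := by
  obtain ⟨m₁, t₁, c₁, hc₁, he₁⟩ := hf
  obtain ⟨m₂, t₂, c₂, hc₂, he₂⟩ := hg
  refine ⟨m₁ + m₂, compTerm t₁ t₂, Fin.append c₁ c₂, ?_, ?_⟩
  · intro k
    refine Fin.addCases (fun k => ?_) (fun k => ?_) k
    · rw [Fin.append_left]; exact hc₁ k
    · rw [Fin.append_right]; exact hc₂ k
  · intro i
    funext x
    have hco : (fun k => Fin.append c₁ c₂ k i) =
        Fin.append (fun k => c₁ k i) (fun k => c₂ k i) := by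
      funext k
      refine Fin.addCases (fun k => ?_) (fun k => ?_) k <;>
        simp [Fin.append_left, Fin.append_right]
    show f i (g i x) = _
    simp only [he₁ i, he₂ i]
    rw [hco, compTerm_eval]

/-- lift a unary polynomial of coordinate i to a polynomial family. -/
lemma lift_poly (hR : SubdirectFam S R) (i : Fin n) {p : 𝔸 i → 𝔸 i}
    (hp : IsUnaryPoly (S i) p) :
    ∃ f : ∀ k, 𝔸 k → 𝔸 k, IsPolyFam S R f ∧ f i = p := by
  obtain ⟨m, t, c, rfl⟩ := hp
  choose r hrR hri using fun k => hR.2 i (c k)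
  refine ⟨fun k x => t.eval (S k) (Fin.cons x (fun l => r l k)), ⟨m, t, r, hrR, fun k => rfl⟩, ?_⟩
  funext x
  show Term.eval (S i) t (Fin.cons x fun l => r l i) = _
  congr 1
  funext jj
  refine Fin.cases rfl (fun l => ?_) jj
  simp [Fin.cons_succ, hri]

def famPow (F : ∀ k, 𝔸 k → 𝔸 k) (m : ℕ) : ∀ k, 𝔸 k → 𝔸 k := fun k => (F k)^[m]

lemma famPow_polyfam {F : ∀ k, 𝔸 k → 𝔸 k} (hF : IsPolyFam S R F) :
    ∀ m, 1 ≤ m → IsPolyFam S R (famPow F m) := by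
  intro m hm
  induction m with
  | zero => omega
  | succ m ih =>
    rcases Nat.eq_or_lt_of_le hm with h | h
    · have : famPow F 1 = F := by funext k x; simp [famPow]
      rw [← h, this]; exact hF
    · have h1 : 1 ≤ m := by omega
      have : famPow F (m + 1) = fun k x => F k (famPow F m k x) := by
        funext k x; simp [famPow, Function.iterate_succ_apply']
      rw [this]
      exact IsPolyFam.comp hF (ih h1)

lemma exists_idem_pow [∀ i, Finite (𝔸 i)] (F : ∀ k, 𝔸 k → 𝔸 k) :
    ∃ N, 1 ≤ N ∧ ∀ k x, (F k)^[N] ((F k)^[N] x) = (F k)^[N] x := by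
  classical
  have hfin : Finite (∀ k, 𝔸 k → 𝔸 k) := by infer_instance
  obtain ⟨a, b, hne, heq⟩ := Finite.exists_ne_map_eq_of_infinite (famPow F)
  wlog hab : a < b generalizing a b
  · exact this b a hne.symm heq.symm (by omega)
  set p := b - a with hp
  have hp1 : 1 ≤ p := by omega
  have hkey : ∀ m, a ≤ m → famPow F (m + p) = famPow F m := by
    intro m hm
    funext k
    have h1 : famPow F (a + p) = famPow F a := by
      rw [hp]; rw [show a + (b - a) = b by omega]; exact heq.symm
    have h2 : (F k)^[a + p] = (F k)^[a] := congrFun h1 k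
    show (F k)^[m + p] = (F k)^[m]
    have : m + p = (m - a) + (a + p) := by omega
    rw [this, Function.iterate_add, h2, ← Function.iterate_add,
      show m - a + a = m by omega]
  have hrep : ∀ t m, a ≤ m → famPow F (m + t * p) = famPow F m := by
    intro t
    induction t with
    | zero => intro m _; simp
    | succ t ih =>
      intro m hm
      have : m + (t + 1) * p = (m + t * p) + p := by ring
      rw [this, hkey _ (by omega), ih m hm]
  refine ⟨(a + 1) * p, by nlinarith, fun k x => ?_⟩
  have hNa : a ≤ (a + 1) * p := by nlinarith
  have := hrep (a + 1) ((a + 1) * p) hNa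
  have h2 : famPow F ((a + 1) * p + (a + 1) * p) = famPow F ((a + 1) * p) := this
  have h3 : (F k)^[(a+1)*p + (a+1)*p] = (F k)^[(a+1)*p] := congrFun h2 k
  calc (F k)^[(a+1)*p] ((F k)^[(a+1)*p] x) = (F k)^[(a+1)*p + (a+1)*p] x := by
        rw [Function.iterate_add_apply]
    _ = (F k)^[(a+1)*p] x := by rw [h3]

end Fam

lemma pres_iterate {A : Type} {p : A → A} {α : A → A → Prop}
    (hpres : ∀ a b, α a b → α (p a) (p b)) :
    ∀ m a b, α a b → α (p^[m] a) (p^[m] b) := by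
  intro m
  induction m with
  | zero => simpa using fun a b h => h
  | succ m ih =>
    intro a b h
    rw [Function.iterate_succ_apply', Function.iterate_succ_apply']
    exact hpres _ _ (ih a b h)

lemma collapses_iterate {A : Type} {p : A → A} {α β : A → A → Prop}
    (hpres : ∀ a b, α a b → α (p a) (p b)) (hcol : Collapses p β α) :
    ∀ m, 1 ≤ m → Collapses (p^[m]) β α := by
  intro m hm x y hxy
  obtain ⟨m', rfl⟩ : ∃ m', m = m' + 1 := ⟨m - 1, by omega⟩
  rw [Function.iterate_succ_apply, Function.iterate_succ_apply]
  exact pres_iterate hpres m' _ _ (hcol x y hxy)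

end UAlg

open UAlg

/-- a separating polynomial may be chosen idempotent with image on
the i-th coordinate an (α_i,β_i)-minimal set. -/
theorem stmt5 {σ : Sig} {n : ℕ} {𝔸 : Fin n → Type} [∀ i, Finite (𝔸 i)]
    (S : ∀ i, Str σ (𝔸 i)) (R : Set (∀ i, 𝔸 i)) (hR : SubdirectFam S R)
    (i j : Fin n) (αi βi : 𝔸 i → 𝔸 i → Prop) (αj βj : 𝔸 j → 𝔸 j → Prop)
    (hαi : IsCongruence (S i) αi) (hβi : IsCongruence (S i) βi)
    (hαj : IsCongruence (S j) αj) (hβj : IsCongruence (S j) βj)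
    (hpi : Prec (S i) αi βi) (hpj : Prec (S j) αj βj)
    (hsep : SeparatesFam S R i j αi βi αj βj) :
    ∃ f, IsPolyFam S R f ∧ (∀ k x, f k (f k x) = f k x) ∧
      ¬ Collapses (f i) βi αi ∧ Collapses (f j) βj αj ∧
      MinSet (S i) αi βi (Set.range (f i)) := by
  classical
  set P : (∀ k, 𝔸 k → 𝔸 k) → Prop := fun f =>
    IsPolyFam S R f ∧ ¬ Collapses (f i) βi αi ∧ Collapses (f j) βj αj with hPdef
  have hNe : {m | ∃ f, P f ∧ (Set.range (f i)).ncard = m}.Nonempty := by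
    obtain ⟨f₀, hf₀⟩ := hsep
    exact ⟨_, f₀, hf₀, rfl⟩
  obtain ⟨g, hg, hgcard⟩ := Nat.sInf_mem hNe
  set s := sInf {m | ∃ f, P f ∧ (Set.range (f i)).ncard = m} with hsdef
  have hmin : ∀ h, P h → s ≤ (Set.range (h i)).ncard := fun h hh =>
    Nat.sInf_le ⟨h, hh, rfl⟩
  set U := Set.range (g i) with hUdef
  -- the non-collapsed pair
  have hex : ∃ x y, βi x y ∧ ¬ αi (g i x) (g i y) := by
    by_contra h
    push_neg at h
    exact hg.2.1 h
  obtain ⟨x, y, hxy, hnxy⟩ := hex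
  have hβuv : βi (g i x) (g i y) := (hg.1.coord i).pres hβi hxy
  -- key step applied to g i itself
  obtain ⟨q, hq, hqn⟩ := key_step hαi hβi hpi hβuv hnxy (hg.1.coord i) hg.2.1
  obtain ⟨Q, hQfam, hQi⟩ := lift_poly hR i hq
  set M : ∀ k, 𝔸 k → 𝔸 k := fun k z => g k (Q k z) with hMdef
  have hMfam : IsPolyFam S R M := hg.1.comp hQfam
  have hMiu : ∀ z, M i z = g i (q z) := fun z => by rw [hMdef]; simp [hQi]
  have hMj : Collapses (M j) βj αj := fun c d hcd =>
    hg.2.2 _ _ ((hQfam.coord j).pres hβj hcd)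
  have hMjpres : ∀ a b, αj a b → αj (M j a) (M j b) := fun a b hab =>
    (hg.1.coord j).pres hαj ((hQfam.coord j).pres hαj hab)
  have hMnc : ¬ αi (M i (g i x)) (M i (g i y)) := by
    rw [hMiu, hMiu]; exact hqn
  -- ψ = M ∘ g has minimal image, giving M i '' U = U
  have hψP : P (fun k z => M k (g k z)) := by
    refine ⟨hMfam.comp hg.1, ?_, ?_⟩
    · intro hcol
      exact hMnc (hcol x y hxy)
    · intro c d hcd
      exact hMjpres _ _ (hg.2.2 c d hcd)
  have hMiUsub : M i '' U ⊆ U := by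
    rintro w ⟨z, -, rfl⟩
    rw [hMiu]
    exact ⟨q z, rfl⟩
  have hrangeψ : Set.range ((fun k z => M k (g k z)) i) = M i '' U := by
    show Set.range (M i ∘ g i) = M i '' U
    rw [Set.range_comp]
  have hMU : M i '' U = U := by
    refine Set.eq_of_subset_of_ncard_le hMiUsub ?_ (Set.toFinite U)
    have h1 := hmin _ hψP
    rw [hrangeψ] at h1
    rw [hgcard]
    exact h1
  -- idempotent power
  obtain ⟨N, hN1, hNid⟩ := exists_idem_pow M
  set e := famPow M N with hedef
  have hefam : IsPolyFam S R e := famPow_polyfam hMfam N hN1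
  have heit : ∀ k, e k = (M k)^[N] := fun k => rfl
  have hMimem : ∀ w ∈ U, M i w ∈ U := fun w hw => hMU ▸ Set.mem_image_of_mem _ hw
  have himg : ∀ m, (M i)^[m] '' U = U := by
    intro m
    induction m with
    | zero => simp
    | succ m ih =>
      rw [Function.iterate_succ, Set.image_comp, hMU, ih]
  have hfix : ∀ w ∈ U, e i w = w := by
    intro w hw
    have hmem : w ∈ (M i)^[N] '' U := by rw [himg N]; exact hw
    obtain ⟨w', -, rfl⟩ := hmem
    exact hNid i w'
  have hxU : g i x ∈ U := ⟨x, rfl⟩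
  have hyU : g i y ∈ U := ⟨y, rfl⟩
  have hnce : ¬ Collapses (e i) βi αi := by
    intro hcol
    have hc := hcol _ _ hβuv
    rw [hfix _ hxU, hfix _ hyU] at hc
    exact hnxy hc
  have hcej : Collapses (e j) βj αj := by
    have := collapses_iterate hMjpres hMj N hN1
    rw [heit j]
    exact this
  have hiterU : ∀ m w, w ∈ U → (M i)^[m] w ∈ U := by
    intro m
    induction m with
    | zero => simpa using fun w h => h
    | succ m ih =>
      intro w hw
      rw [Function.iterate_succ_apply]
      exact ih _ (hMimem _ hw)
  have hrangeE : Set.range (e i) = U := by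
    apply Set.Subset.antisymm
    · rintro w ⟨z, rfl⟩
      obtain ⟨N', hNN⟩ : ∃ N', N = N' + 1 := ⟨N - 1, (Nat.succ_pred_eq_of_pos hN1).symm⟩
      rw [heit i, hNN, Function.iterate_succ_apply]
      have hz : M i z ∈ U := by rw [hMiu]; exact ⟨q z, rfl⟩
      exact hiterU N' _ hz
    · intro w hw
      exact ⟨w, hfix w hw⟩
  refine ⟨e, hefam, fun k z => hNid k z, hnce, hcej, ?_⟩
  rw [hrangeE]
  constructor
  · exact ⟨e i, hefam.coord i, hnce, hrangeE⟩
  · rintro V ⟨p', hp', hp'nc, hp'range⟩ hVU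
    obtain ⟨q', hq', hq'n⟩ := key_step hαi hβi hpi hβuv hnxy hp' hp'nc
    obtain ⟨W, hWfam, hWi⟩ := lift_poly hR i (hp'.comp hq')
    have hφP : P (fun k z => W k (g k z)) := by
      refine ⟨hWfam.comp hg.1, ?_, ?_⟩
      · intro hcol
        have hc := hcol x y hxy
        simp only [hWi] at hc
        exact hq'n hc
      · intro c d hcd
        exact (hWfam.coord j).pres hαj (hg.2.2 c d hcd)
    have hsub : Set.range ((fun k z => W k (g k z)) i) ⊆ V := by
      rintro w ⟨z, rfl⟩
      simp only [hWi]
      rw [← hp'range]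
      exact ⟨q' (g i z), rfl⟩
    have h1 := hmin _ hφP
    have h2 := Set.ncard_le_ncard hsub (Set.toFinite V)
    have h3 := Set.ncard_le_ncard hVU (Set.toFinite U)
    refine Set.eq_of_subset_of_ncard_le hVU ?_ (Set.toFinite U)
    rw [hgcard]
    exact le_trans h1 h2
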